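/- An erfc inequality (positivity of the expected neighbor feature): for all τ > 0 and a > 0, erfc((τ − a)/√2) > e^{2τa} · erfc((τ + a)/√2). -/
import Mathlib

open MeasureTheory

/-- The standard Gaussian density `φ(x) = (1/√(2π)) e^{-x²/2}`. -/
noncomputable def phi (x : ℝ) : ℝ :=
  (Real.sqrt (2 * Real.pi))⁻¹ * Real.exp (-x ^ 2 / 2)

/-- The Gauss error function `erf(z) = (2/√π) ∫₀^z e^{-t²} dt`. -/
noncomputable def erf (z : ℝ) : ℝ :=
  (2 / Real.sqrt Real.pi) * ∫ t in (0 : ℝ)..z, Real.exp (-t ^ 2)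

/-- The complementary error function `erfc(z) = 1 - erf(z)`. -/
noncomputable def erfc (z : ℝ) : ℝ := 1 - erf z

lemma integrable_gauss : Integrable (fun t : ℝ => Real.exp (-t ^ 2)) := by
  have := integrable_exp_neg_mul_sq (b := (1 : ℝ)) one_pos
  simpa using this

lemma integral_gauss_real : (∫ t : ℝ, Real.exp (-t ^ 2)) = Real.sqrt Real.pi := by
  have := integral_gaussian (1 : ℝ)
  simpa using this

lemma integral_gauss_Ioi_zero :
    (∫ t in Set.Ioi (0 : ℝ), Real.exp (-t ^ 2)) = Real.sqrt Real.pi / 2 := by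
  have := integral_gaussian_Ioi (1 : ℝ)
  simpa using this

/-- `erfc z = (2/√π) ∫_{z}^{∞} e^{-t²}`. -/
lemma erfc_eq_integral_Ioi (z : ℝ) :
    erfc z = (2 / Real.sqrt Real.pi) * ∫ t in Set.Ioi z, Real.exp (-t ^ 2) := by
  have hInt := integrable_gauss
  have hIic : ∀ w : ℝ, IntegrableOn (fun t : ℝ => Real.exp (-t ^ 2)) (Set.Iic w) :=
    fun w => hInt.integrableOn
  have hsplit : ∀ w : ℝ,
      (∫ t in Set.Iic w, Real.exp (-t ^ 2)) + (∫ t in Set.Ioi w, Real.exp (-t ^ 2))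
        = Real.sqrt Real.pi := by
    intro w
    rw [← integral_gauss_real,
      ← intervalIntegral.integral_Iic_add_Ioi (hInt.integrableOn) (hInt.integrableOn)]
  have hIic0 : (∫ t in Set.Iic (0 : ℝ), Real.exp (-t ^ 2)) = Real.sqrt Real.pi / 2 := by
    have := hsplit 0
    rw [integral_gauss_Ioi_zero] at this
    linarith
  have hio : (∫ t in (0 : ℝ)..z, Real.exp (-t ^ 2))
      = (∫ t in Set.Iic z, Real.exp (-t ^ 2)) - (∫ t in Set.Iic (0 : ℝ), Real.exp (-t ^ 2)) :=
    (intervalIntegral.integral_Iic_sub_Iic (hIic 0) (hIic z)).symm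
  have hIicz : (∫ t in Set.Iic z, Real.exp (-t ^ 2))
      = Real.sqrt Real.pi - ∫ t in Set.Ioi z, Real.exp (-t ^ 2) := by
    have := hsplit z; linarith
  have hπ : Real.sqrt Real.pi ≠ 0 := by
    positivity
  unfold erfc erf
  rw [hio, hIicz, hIic0]
  field_simp
  ring

lemma shift_integral (z c : ℝ) :
    (∫ t in Set.Ioi (z + c), Real.exp (-t ^ 2))
      = ∫ s in Set.Ioi z, Real.exp (-(s + c) ^ 2) := by
  rw [← integral_indicator measurableSet_Ioi, ← integral_indicator measurableSet_Ioi]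
  rw [← integral_add_right_eq_self
      (fun x => Set.indicator (Set.Ioi (z + c)) (fun t => Real.exp (-t ^ 2)) x) c]
  congr 1
  funext s
  by_cases hs : s ∈ Set.Ioi z
  · have hs' : s + c ∈ Set.Ioi (z + c) := by simpa using hs.out
    rw [Set.indicator_of_mem hs', Set.indicator_of_mem hs]
  · have hs' : s + c ∉ Set.Ioi (z + c) := by
      simp only [Set.mem_Ioi] at hs ⊢; linarith [not_lt.mp hs]
    rw [Set.indicator_of_notMem hs', Set.indicator_of_notMem hs]

lemma integrable_gauss_shift (c : ℝ) :
    Integrable (fun s : ℝ => Real.exp (-(s + c) ^ 2)) := by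
  have h : MeasurePreserving (fun x : ℝ => x + c) volume volume :=
    measurePreserving_add_right volume c
  exact (h.integrable_comp integrable_gauss.aestronglyMeasurable).2 integrable_gauss

/-- an erfc inequality, positivity of the expected neighbor feature in
the proof of Theorem 4.1: for all `τ > 0` and `a > 0`,
`erfc((τ-a)/√2) > e^{2τa} erfc((τ+a)/√2)`. -/
theorem erfc_tilt_inequality (τ a : ℝ) (hτ : 0 < τ) (ha : 0 < a) :
    Real.exp (2 * τ * a) * erfc ((τ + a) / Real.sqrt 2) <
      erfc ((τ - a) / Real.sqrt 2) := by
  set z₁ : ℝ := (τ - a) / Real.sqrt 2 with hz₁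
  set c : ℝ := Real.sqrt 2 * a with hc
  have h2 : (0:ℝ) < Real.sqrt 2 := Real.sqrt_pos.mpr (by norm_num)
  have h2sq : Real.sqrt 2 * Real.sqrt 2 = 2 := Real.mul_self_sqrt (by norm_num)
  have hz₂ : (τ + a) / Real.sqrt 2 = z₁ + c := by
    rw [hz₁, hc]
    field_simp
    nlinarith [h2sq]
  -- the two integrands on Ioi z₁
  set f : ℝ → ℝ := fun s => Real.exp (-s ^ 2) with hf
  set g : ℝ → ℝ := fun s => Real.exp (2 * τ * a) * Real.exp (-(s + c) ^ 2) with hg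
  have hfi : IntegrableOn f (Set.Ioi z₁) := integrable_gauss.integrableOn
  have hgi : IntegrableOn g (Set.Ioi z₁) :=
    ((integrable_gauss_shift c).const_mul _).integrableOn
  -- pointwise strict inequality on Ioi z₁
  have hlt : ∀ s ∈ Set.Ioi z₁, g s < f s := by
    intro s hs
    show Real.exp (2 * τ * a) * Real.exp (-(s + c) ^ 2) < Real.exp (-s ^ 2)
    rw [← Real.exp_add, Real.exp_lt_exp]
    have hs' : z₁ < s := hs
    have h1 : τ - a < Real.sqrt 2 * s := by
      have := (div_lt_iff₀ h2).mp hs'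
      linarith [this]
    have hexp : (s + c) ^ 2 = s ^ 2 + 2 * (Real.sqrt 2 * a) * s + 2 * a ^ 2 := by
      rw [hc]; ring_nf; nlinarith [h2sq]
    nlinarith [mul_pos ha (sub_pos.mpr h1)]
  -- positivity of the difference integral
  have hpos : 0 < ∫ s in Set.Ioi z₁, (f s - g s) := by
    rw [setIntegral_pos_iff_support_of_nonneg_ae]
    · have hsubset : Set.Ioi z₁ ⊆ (Function.support fun s => f s - g s) ∩ Set.Ioi z₁ := by
        intro s hs
        exact ⟨sub_ne_zero.mpr (hlt s hs).ne', hs⟩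
      calc (0:ENNReal) < volume (Set.Ioi z₁) := by simp [Real.volume_Ioi]
        _ ≤ _ := measure_mono hsubset
    · filter_upwards [ae_restrict_mem measurableSet_Ioi] with s hs
      exact le_of_lt (sub_pos.mpr (hlt s hs))
    · exact hfi.sub hgi
  have hsub : (∫ s in Set.Ioi z₁, (f s - g s))
      = (∫ s in Set.Ioi z₁, f s) - ∫ s in Set.Ioi z₁, g s := integral_sub hfi hgi
  have hmain : (∫ s in Set.Ioi z₁, g s) < ∫ s in Set.Ioi z₁, f s := by
    rw [hsub] at hpos; linarith
  have hgint : (∫ s in Set.Ioi z₁, g s)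
      = Real.exp (2 * τ * a) * ∫ t in Set.Ioi (z₁ + c), Real.exp (-t ^ 2) := by
    rw [shift_integral z₁ c, hg, integral_const_mul]
  -- assemble
  rw [erfc_eq_integral_Ioi, erfc_eq_integral_Ioi, hz₂]
  have hπ : (0:ℝ) < 2 / Real.sqrt Real.pi := by positivity
  have := hmain
  rw [hgint] at this
  calc Real.exp (2 * τ * a) *
        ((2 / Real.sqrt Real.pi) * ∫ t in Set.Ioi (z₁ + c), Real.exp (-t ^ 2))
      = (2 / Real.sqrt Real.pi) *
        (Real.exp (2 * τ * a) * ∫ t in Set.Ioi (z₁ + c), Real.exp (-t ^ 2)) := by ring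
    _ < (2 / Real.sqrt Real.pi) * ∫ s in Set.Ioi z₁, f s := by
        exact (mul_lt_mul_iff_right₀ hπ).mpr this
    _ = (2 / Real.sqrt Real.pi) * ∫ t in Set.Ioi z₁, Real.exp (-t ^ 2) := rfl
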